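/- arXiv:2210.03263 — 2 statements merged into one kernel-verified Lean document; each statement's English description precedes it below -/
import Mathlib

section
/- Let sn(r) = sinh(r), cs(r) = cosh(r), ct(r) = cs(r)/sn(r), A(r) = ∫₀^r sinh(t)^(k-1) dt, and a(r) := k·(A(r)/A'(r))·ct(r). Then a(r) ≥ 1 for all r > 0. -/
open Real

/-- `A(r) = ∫₀^r sinh(t)^(k-1) dt` in the hyperbolic case. -/
noncomputable def Afun (k : ℕ) (r : ℝ) : ℝ := ∫ t in (0:ℝ)..r, Real.sinh t ^ (k - 1)

/-- in the hyperbolic case, `a(r) := k·(A(r)/A'(r))·coth(r) ≥ 1` for all `r > 0`,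
where `A'(r) = sinh(r)^(k-1)`. -/
theorem stmt2 (k : ℕ) (hk : 1 ≤ k) :
    ∀ r : ℝ, 0 < r →
      1 ≤ (k : ℝ) * (Afun k r / Real.sinh r ^ (k - 1)) * (Real.cosh r / Real.sinh r) := by
  intro r hr
  have hs : 0 < Real.sinh r := Real.sinh_pos_iff.mpr hr
  -- FTC: sinh r ^ k = ∫₀^r k * sinh t ^ (k-1) * cosh t
  have hftc : Real.sinh r ^ k
      = ∫ t in (0:ℝ)..r, (k : ℝ) * Real.sinh t ^ (k - 1) * Real.cosh t := by
    have := intervalIntegral.integral_eq_sub_of_hasDerivAt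
      (f := fun x => Real.sinh x ^ k)
      (f' := fun t => (k : ℝ) * Real.sinh t ^ (k - 1) * Real.cosh t)
      (a := 0) (b := r)
      (fun t _ => (Real.hasDerivAt_sinh t).pow k)
      (Continuous.intervalIntegrable (by continuity) 0 r)
    rw [this, Real.sinh_zero, zero_pow (by omega : k ≠ 0), sub_zero]
  -- Monotonicity: cosh t ≤ cosh r on [0, r]
  have hmono : (∫ t in (0:ℝ)..r, (k : ℝ) * Real.sinh t ^ (k - 1) * Real.cosh t)
      ≤ ∫ t in (0:ℝ)..r, (k : ℝ) * Real.sinh t ^ (k - 1) * Real.cosh r := by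
    apply intervalIntegral.integral_mono_on hr.le
      (Continuous.intervalIntegrable (by continuity) 0 r)
      (Continuous.intervalIntegrable (by continuity) 0 r)
    intro t ht
    have hsn : 0 ≤ Real.sinh t := Real.sinh_nonneg_iff.mpr ht.1
    have hc : Real.cosh t ≤ Real.cosh r := by
      rw [Real.cosh_le_cosh, abs_of_nonneg ht.1, abs_of_nonneg hr.le]
      exact ht.2
    have : (0:ℝ) ≤ (k : ℝ) * Real.sinh t ^ (k - 1) := by positivity
    exact mul_le_mul_of_nonneg_left hc this
  have hA : (∫ t in (0:ℝ)..r, (k : ℝ) * Real.sinh t ^ (k - 1) * Real.cosh r)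
      = (k : ℝ) * Afun k r * Real.cosh r := by
    rw [Afun]
    rw [intervalIntegral.integral_mul_const, intervalIntegral.integral_const_mul]
  have key : Real.sinh r ^ k ≤ (k : ℝ) * Afun k r * Real.cosh r := by
    rw [hftc]; rw [hA] at hmono; exact hmono
  have hspow : Real.sinh r ^ (k - 1) * Real.sinh r = Real.sinh r ^ k := by
    rw [← pow_succ]
    congr 1
    omega
  have hspos : (0:ℝ) < Real.sinh r ^ k := pow_pos hs k
  have heq : (k : ℝ) * (Afun k r / Real.sinh r ^ (k - 1)) * (Real.cosh r / Real.sinh r)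
      = ((k : ℝ) * Afun k r * Real.cosh r) / Real.sinh r ^ k := by
    rw [← hspow]
    field_simp
  rw [heq, le_div_iff₀ hspos, one_mul]
  exact key
end

section
/- Fix R ∈ (0, π/2) and s_y ∈ [0, R) with cos(R + s_y) > 0, and define in the spherical case u(s) := arccos(cos(s - s_y)·cos(R)/cos(s)) for s ∈ (-R, R). Then u'(s) ≤ 0 for all s ∈ (-R, R). -/
open Real

/-- in the spherical case with
`u(s) = arccos(cos(s - s_y)·cos(R)/cos(s))`, `R ∈ (0, π/2)`, `s_y ∈ [0, R)` and
`cos(R + s_y) > 0`, one has `u'(s) ≤ 0` for all `s ∈ (-R, R)`. -/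
theorem stmt7 (R sy : ℝ) (hR : 0 < R) (hR' : R < Real.pi / 2)
    (hsy : 0 ≤ sy) (hsyR : sy < R) (hcos : 0 < Real.cos (R + sy))
    (u : ℝ → ℝ)
    (hu : ∀ s, u s = Real.arccos (Real.cos (s - sy) * Real.cos R / Real.cos s))
    (s : ℝ) (hs : -R < s) (hs' : s < R) :
    deriv u s ≤ 0 := by
  have hpi := Real.pi_pos
  have hRsy : R + sy < Real.pi / 2 := by
    by_contra h
    push_neg at h
    have : Real.cos (R + sy) ≤ 0 :=
      Real.cos_nonpos_of_pi_div_two_le_of_le h (by linarith)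
    linarith
  have hcs : 0 < Real.cos s := Real.cos_pos_of_mem_Ioo ⟨by linarith, by linarith⟩
  have hcssy : 0 < Real.cos (s - sy) :=
    Real.cos_pos_of_mem_Ioo ⟨by linarith, by linarith⟩
  have hcR : 0 < Real.cos R := Real.cos_pos_of_mem_Ioo ⟨by linarith, by linarith⟩
  have hcsgt : Real.cos R < Real.cos s := by
    have h1 : Real.cos R < Real.cos |s| := by
      apply Real.cos_lt_cos_of_nonneg_of_le_pi (abs_nonneg s) (by linarith)
      cases abs_cases s with
      | inl h => linarith [h.1]
      | inr h => linarith [h.1]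
    rwa [Real.cos_abs] at h1
  have hssin : Real.sin s < Real.sin R := by
    apply Real.sin_lt_sin_of_lt_of_le_pi_div_two (by linarith) (le_of_lt hR') hs'
  have hsinsy : 0 ≤ Real.sin sy := Real.sin_nonneg_of_nonneg_of_le_pi hsy (by linarith)
  have hcR1 : Real.cos R < 1 := by
    calc Real.cos R < Real.cos |0| := by
          apply Real.cos_lt_cos_of_nonneg_of_le_pi (abs_nonneg 0) (by linarith)
          simpa using hR
      _ = 1 := by simp
  have hcsy1 : Real.cos sy ≤ 1 := Real.cos_le_one sy
  have hcsy0 : 0 < Real.cos sy := Real.cos_pos_of_mem_Ioo ⟨by linarith, by linarith⟩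
  have hcosRsy : Real.cos R * Real.cos sy + Real.sin R * Real.sin sy ≤ 1 := by
    have := Real.cos_le_one (R - sy)
    rwa [Real.cos_sub] at this
  -- key: cos (s - sy) * cos R < cos s
  have hkey : Real.cos (s - sy) * Real.cos R < Real.cos s := by
    rw [Real.cos_sub]
    nlinarith [mul_pos hcR hcsy0, (sub_pos.mpr hssin),
      mul_nonneg (sub_nonneg.mpr hssin.le) hsinsy,
      mul_pos (sub_pos.mpr hcsgt) (sub_pos.mpr (show Real.cos R * Real.cos sy < 1 by nlinarith)),
      mul_nonneg hcR.le (sub_nonneg.mpr hcosRsy)]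
  set A : ℝ := Real.cos (s - sy) * Real.cos R / Real.cos s with hA
  have hA1 : 0 < A := div_pos (mul_pos hcssy hcR) hcs
  have hA2 : A < 1 := (div_lt_one hcs).mpr hkey
  -- derivative of inner function
  have hinner : HasDerivAt (fun t => Real.cos (t - sy) * Real.cos R / Real.cos t)
      ((-Real.sin (s - sy) * 1 * Real.cos R * Real.cos s -
        Real.cos (s - sy) * Real.cos R * (-Real.sin s)) / (Real.cos s) ^ 2) s := by
    have h1 : HasDerivAt (fun t => t - sy) 1 s := (hasDerivAt_id s).sub_const sy
    have h2 : HasDerivAt (fun t => Real.cos (t - sy) * Real.cos R)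
        (-Real.sin (s - sy) * 1 * Real.cos R) s := h1.cos.mul_const _
    exact h2.div (Real.hasDerivAt_cos s) (ne_of_gt hcs)
  have harc : HasDerivAt (fun t => Real.arccos (Real.cos (t - sy) * Real.cos R / Real.cos t))
      (-(1 / Real.sqrt (1 - A ^ 2)) *
        ((-Real.sin (s - sy) * 1 * Real.cos R * Real.cos s -
          Real.cos (s - sy) * Real.cos R * (-Real.sin s)) / (Real.cos s) ^ 2)) s := by
    exact HasDerivAt.comp (h₂ := Real.arccos) s (Real.hasDerivAt_arccos (x := A) (by linarith) (ne_of_lt hA2)) hinner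
  have hu' : u = fun t => Real.arccos (Real.cos (t - sy) * Real.cos R / Real.cos t) :=
    funext hu
  rw [hu', harc.deriv]
  have hnum : -Real.sin (s - sy) * 1 * Real.cos R * Real.cos s -
      Real.cos (s - sy) * Real.cos R * (-Real.sin s) =
      Real.cos R * Real.sin sy := by
    have h := Real.sin_sub s (s - sy)
    simp at h
    nlinarith [h]
  rw [hnum]
  apply mul_nonpos_of_nonpos_of_nonneg
  · apply neg_nonpos_of_nonneg
    positivity
  · positivity
end
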